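/- (Refined Lieb–Sokal Lemma) Let g(z) + y·f(z) ∈ ℂ[z_1,…,z_n,y] be stable and assume ρ_v(f) ≤ 1 for some v ∈ ℝ^n with all components non-negative. Then g(z) − ∂_v f(z) ∈ ℂ[z_1,…,z_n] is stable or identically zero. -/

import Mathlib

open MvPolynomial

noncomputable def cderiv {n : ℕ} (u : Fin n → ℂ) (p : MvPolynomial (Fin n) ℂ) :
    MvPolynomial (Fin n) ℂ :=
  ∑ j, C (u j) * pderiv j p

lemma cderiv_C {n : ℕ} (u : Fin n → ℂ) (a : ℂ) : cderiv u (C a) = 0 := by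
  simp [cderiv, pderiv_C]

lemma cderiv_add {n : ℕ} (u : Fin n → ℂ) (p q : MvPolynomial (Fin n) ℂ) :
    cderiv u (p + q) = cderiv u p + cderiv u q := by
  simp [cderiv, mul_add, Finset.sum_add_distrib]

lemma cderiv_mul_X {n : ℕ} (u : Fin n → ℂ) (p : MvPolynomial (Fin n) ℂ) (j : Fin n) :
    cderiv u (p * X j) = cderiv u p * X j + C (u j) * p := by
  classical
  simp only [cderiv, pderiv_mul, pderiv_X, mul_add, ← mul_assoc]
  rw [Finset.sum_add_distrib, Finset.sum_mul]
  congr 1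
  rw [Finset.sum_eq_single j]
  · simp
  · intro i _ hij
    simp [Pi.single_eq_of_ne (Ne.symm hij)]
  · intro hj; exact absurd (Finset.mem_univ j) hj

noncomputable def lineP {n : ℕ} (z u : Fin n → ℂ) (p : MvPolynomial (Fin n) ℂ) :
    Polynomial ℂ :=
  MvPolynomial.aeval (fun j => Polynomial.C (z j) + Polynomial.C (u j) * Polynomial.X) p

lemma lineP_eval {n : ℕ} (z u : Fin n → ℂ) (p : MvPolynomial (Fin n) ℂ) (t : ℂ) :
    (lineP z u p).eval t = eval (fun j => z j + t * u j) p := by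
  induction p using MvPolynomial.induction_on with
  | C a => simp [lineP]
  | add p q hp hq => simp [lineP, map_add, Polynomial.eval_add] at *; rw [hp, hq]
  | mul_X p j hp =>
      simp only [lineP, map_mul, aeval_X, Polynomial.eval_mul, Polynomial.eval_add,
        Polynomial.eval_C, Polynomial.eval_X, MvPolynomial.eval_mul, MvPolynomial.eval_X] at *
      rw [hp]; ring

lemma lineP_derivative {n : ℕ} (z u : Fin n → ℂ) (p : MvPolynomial (Fin n) ℂ) :
    (lineP z u p).derivative = lineP z u (cderiv u p) := by
  induction p using MvPolynomial.induction_on with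
  | C a => simp [lineP, cderiv_C]
  | add p q hp hq =>
      simp only [lineP, map_add, Polynomial.derivative_add, cderiv_add] at *
      rw [hp, hq]
  | mul_X p j hp =>
      rw [cderiv_mul_X]
      simp only [lineP, map_add, map_mul, aeval_X, aeval_C] at *
      rw [Polynomial.derivative_mul, hp]
      simp only [Polynomial.derivative_add, Polynomial.derivative_C,
        Polynomial.derivative_mul, Polynomial.derivative_X, Polynomial.algebraMap_eq]
      ring

/-- A polynomial is stable if it has no root with all imaginary parts positive. -/
def Stable {σ : Type*} (f : MvPolynomial σ ℂ) : Prop :=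
  ∀ z : σ → ℂ, (∀ i, 0 < (z i).im) → eval z f ≠ 0

/-- The polynomial `g(z) + y·f(z) ∈ ℂ[z_1,…,z_n,y]`, where `y` is the last variable. -/
noncomputable def liftPoly {n : ℕ} (g f : MvPolynomial (Fin n) ℂ) :
    MvPolynomial (Fin (n + 1)) ℂ :=
  rename Fin.castSucc g + X (Fin.last n) * rename Fin.castSucc f

/-- The directional derivative `∂_v f = Σ_j v_j ∂f/∂z_j`. -/
noncomputable def dirDeriv {n : ℕ} (v : Fin n → ℝ) (f : MvPolynomial (Fin n) ℂ) :
    MvPolynomial (Fin n) ℂ :=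
  ∑ j, C ((v j : ℝ) : ℂ) * pderiv j f

lemma dirDeriv_eq_cderiv {n : ℕ} (v : Fin n → ℝ) (f : MvPolynomial (Fin n) ℂ) :
    dirDeriv v f = cderiv (fun j => ((v j : ℝ) : ℂ)) f := rfl

lemma lineP_eval_zero {n : ℕ} (z u : Fin n → ℂ) (p : MvPolynomial (Fin n) ℂ) :
    (lineP z u p).eval 0 = eval z p := by
  rw [lineP_eval]
  have h : (fun j => z j + 0 * u j) = z := by funext j; ring
  rw [h]

lemma eval_line_affine {n : ℕ} (v : Fin n → ℝ) (f : MvPolynomial (Fin n) ℂ)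
    (hdeg : dirDeriv v (dirDeriv v f) = 0) (z : Fin n → ℂ) (t : ℂ) :
    eval (fun j => z j + t * ((v j : ℝ) : ℂ)) f
      = eval z f + t * eval z (dirDeriv v f) ∧
    eval (fun j => z j + t * ((v j : ℝ) : ℂ)) (dirDeriv v f) = eval z (dirDeriv v f) := by
  set w : Fin n → ℂ := fun j => ((v j : ℝ) : ℂ) with hw
  set P : Polynomial ℂ := lineP z w f with hP
  set P₁ : Polynomial ℂ := lineP z w (dirDeriv v f) with hP₁
  have h1 : P.derivative = P₁ := by
    rw [hP, hP₁, lineP_derivative, dirDeriv_eq_cderiv]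
  have h2 : P₁.derivative = 0 := by
    rw [hP₁, lineP_derivative, ← dirDeriv_eq_cderiv, hdeg]
    simp [lineP]
  set c : ℂ := eval z (dirDeriv v f) with hc
  have hP₁C : P₁ = Polynomial.C c := by
    rw [Polynomial.eq_C_of_derivative_eq_zero h2, Polynomial.coeff_zero_eq_eval_zero,
      hP₁, lineP_eval_zero]
  constructor
  · have hR : P - Polynomial.C (P.eval 0) - Polynomial.C c * Polynomial.X = 0 := by
      have hdR : (P - Polynomial.C (P.eval 0) - Polynomial.C c * Polynomial.X).derivative = 0 := by
        simp [Polynomial.derivative_sub, h1, hP₁C]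
      have := Polynomial.eq_C_of_derivative_eq_zero hdR
      rw [this]
      simp [Polynomial.coeff_zero_eq_eval_zero]
    have h3 : P = Polynomial.C (P.eval 0) + Polynomial.C c * Polynomial.X := by
      linear_combination hR
    have hPt : P.eval t = P.eval 0 + c * t := by
      conv_lhs => rw [h3]
      simp
    have e1 : P.eval t = eval (fun j => z j + t * w j) f := lineP_eval z w f t
    have e0 : P.eval 0 = eval z f := lineP_eval_zero z w f
    rw [← e1, hPt, e0]; ring
  · have : P₁.eval t = c := by rw [hP₁C]; simp
    rw [← this, hP₁, lineP_eval]

open Filter in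
lemma key_open (φ : ℂ → ℂ) (U : Set ℂ) (hU : U ∈ nhds (0:ℂ)) (hφ : AnalyticAt ℂ φ 0)
    (h0 : φ 0 = 0) (hnz : ¬ (∀ᶠ ζ in nhds (0:ℂ), φ ζ = 0)) :
    ∃ ρ : ℝ, 0 < ρ ∧ ∀ t : ℂ, ‖t‖ < ρ → ∃ ζ ∈ U, φ ζ = t := by
  rcases hφ.eventually_constant_or_nhds_le_map_nhds with hc | hm
  · exact absurd (hc.mono fun z hz => by rw [hz, h0]) hnz
  · have himg : φ '' U ∈ Filter.map φ (nhds 0) := Filter.image_mem_map hU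
    have h2 : φ '' U ∈ nhds (0:ℂ) := by rw [← h0]; exact hm himg
    rcases Metric.mem_nhds_iff.mp h2 with ⟨ρ, hρ, hball⟩
    refine ⟨ρ, hρ, fun t ht => ?_⟩
    have : t ∈ Metric.ball (0:ℂ) ρ := by
      simpa [Complex.dist_eq] using ht
    rcases hball this with ⟨ζ, hζU, hζ⟩
    exact ⟨ζ, hζU, hζ⟩

lemma poly_eq_zero_of_eventually {p : Polynomial ℂ}
    (h : ∀ᶠ ζ in nhds (0:ℂ), Polynomial.eval ζ p = 0) : p = 0 := by
  rcases Metric.eventually_nhds_iff.mp h with ⟨ρ, hρ, hball⟩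
  apply Polynomial.eq_zero_of_infinite_isRoot
  have hmem : ∀ k : ℕ, ((ρ / (k + 2) : ℝ) : ℂ) ∈ {x | p.IsRoot x} := by
    intro k
    apply hball
    have hk : (0:ℝ) < (k:ℝ) + 2 := by positivity
    have h1 : ρ / ((k:ℝ) + 2) < ρ := by
      rw [div_lt_iff₀ hk]
      nlinarith
    have h2 : (0:ℝ) < ρ / ((k:ℝ) + 2) := by positivity
    simp only [dist_zero_right, Complex.norm_real, Real.norm_eq_abs]
    rw [abs_of_pos h2]
    exact h1
  apply Set.infinite_of_injective_forall_mem (f := fun k : ℕ => ((ρ / (k + 2) : ℝ) : ℂ)) _ hmem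
  intro a b hab
  have : (ρ / ((a:ℝ) + 2) : ℝ) = (ρ / ((b:ℝ) + 2) : ℝ) := by
    have := Complex.ofReal_injective hab
    push_cast at this ⊢
    exact this
  have ha : ((a:ℝ) + 2) ≠ 0 := by positivity
  have hb : ((b:ℝ) + 2) ≠ 0 := by positivity
  rw [div_eq_div_iff ha hb] at this
  have h4 : (a:ℝ) = b := by
    have h5 : ρ * ((b:ℝ) + 2) = ρ * ((a:ℝ)+2) := by linarith
    have := mul_left_cancel₀ (ne_of_gt hρ) h5
    linarith
  exact_mod_cast h4

lemma eval_liftPoly {n : ℕ} (g f : MvPolynomial (Fin n) ℂ) (z : Fin n → ℂ) (y : ℂ) :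
    eval (Fin.snoc z y) (liftPoly g f) = eval z g + y * eval z f := by
  have hcomp : (Fin.snoc z y : Fin (n+1) → ℂ) ∘ Fin.castSucc = z := by
    funext j; simp
  simp [liftPoly, eval_rename, hcomp]

lemma stable_pair {n : ℕ} {f g : MvPolynomial (Fin n) ℂ} (hst : Stable (liftPoly g f)) :
    ∀ (z : Fin n → ℂ) (y : ℂ), (∀ i, 0 < (z i).im) → 0 < y.im →
      eval z g + y * eval z f ≠ 0 := by
  intro z y hz hy
  have h := hst (Fin.snoc z y) ?_
  · rwa [eval_liftPoly] at h
  · intro i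
    refine Fin.lastCases ?_ ?_ i
    · simpa using hy
    · intro j; simpa using hz j

lemma exists_eval_ne {n : ℕ} {p : MvPolynomial (Fin n) ℂ} (hp : p ≠ 0) :
    ∃ z, eval z p ≠ 0 := by
  by_contra hcon
  push_neg at hcon
  exact hp (MvPolynomial.funext fun x => by simp [hcon x])

lemma exists_delta {n : ℕ} [Nonempty (Fin n)] (z₀ : Fin n → ℂ) (hz₀ : ∀ j, 0 < (z₀ j).im)
    (u : Fin n → ℂ) (v : Fin n → ℝ) (hv : ∀ j, 0 ≤ v j) :
    ∃ δ : ℝ, 0 < δ ∧ ∀ (ζ w : ℂ), ‖ζ‖ ≤ δ → -δ ≤ w.im →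
      ∀ j, 0 < (z₀ j + ζ * u j + w * ((v j : ℝ) : ℂ)).im := by
  set d : Fin n → ℝ := fun j => (z₀ j).im / (2 * (1 + ‖u j‖ + v j)) with hd
  have hdpos : ∀ j, 0 < d j := by
    intro j
    apply div_pos (hz₀ j)
    have h1 : 0 ≤ ‖u j‖ := norm_nonneg _
    have h2 := hv j
    nlinarith
  refine ⟨Finset.univ.inf' Finset.univ_nonempty d, ?_, ?_⟩
  · rw [Finset.lt_inf'_iff]
    intro j _
    exact hdpos j
  · set δ : ℝ := Finset.univ.inf' Finset.univ_nonempty d with hδ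
    intro ζ w hζ hw j
    have hle : δ ≤ d j := Finset.inf'_le d (Finset.mem_univ j)
    have h1 : |(ζ * u j).im| ≤ ‖ζ‖ * ‖u j‖ := by
      rw [← norm_mul]
      exact Complex.abs_im_le_norm _
    have h2 : (w * ((v j : ℝ) : ℂ)).im = w.im * v j := by
      simp [Complex.mul_im]
    have h3 : ‖ζ‖ * ‖u j‖ ≤ δ * ‖u j‖ := by
      apply mul_le_mul_of_nonneg_right hζ (norm_nonneg _)
    have h4 : -(δ * v j) ≤ w.im * v j := by
      have := hv j
      nlinarith
    have h5 : δ * (2 * (1 + ‖u j‖ + v j)) ≤ (z₀ j).im := by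
      rw [hd] at hle
      have hpos : 0 < 2 * (1 + ‖u j‖ + v j) := by
        have h1 : 0 ≤ ‖u j‖ := norm_nonneg _
        have h2 := hv j
        nlinarith
      rw [le_div_iff₀ hpos] at hle
      linarith
    have habs : |(ζ * u j).im| ≤ δ * ‖u j‖ := le_trans h1 h3
    have h6 : -(δ * ‖u j‖) ≤ (ζ * u j).im := by
      have := abs_le.mp habs
      linarith [this.1]
    simp only [Complex.add_im]
    have hδpos : 0 < δ := by
      rw [hδ, Finset.lt_inf'_iff]; intro j _; exact hdpos j
    rw [h2]
    have h7 : 0 ≤ ‖u j‖ := norm_nonneg _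
    have h8 := hv j
    nlinarith

lemma f_stable {n : ℕ} {f g : MvPolynomial (Fin n) ℂ} (hst : Stable (liftPoly g f))
    (hf : f ≠ 0) : Stable f := by
  intro z₀ hz₀
  by_cases hn : Nonempty (Fin n)
  case neg =>
    haveI : IsEmpty (Fin n) := not_nonempty_iff.mp hn
    obtain ⟨a, rfl⟩ := MvPolynomial.C_surjective (Fin n) f
    intro h
    rw [eval_C] at h
    exact hf (by rw [h, map_zero])
  case pos =>
  haveI := hn
  intro hf0
  have hpair := stable_pair hst
  by_cases hg0 : eval z₀ g = 0
  · exact hpair z₀ Complex.I hz₀ (by simp) (by rw [hg0, hf0]; ring)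
  obtain ⟨z₁, hz₁⟩ := exists_eval_ne hf
  set u : Fin n → ℂ := fun j => z₁ j - z₀ j with hu
  obtain ⟨δ, hδ, hmem⟩ := exists_delta z₀ hz₀ u (fun _ => (0:ℝ)) (fun _ => le_refl 0)
  set Pβ := lineP z₀ u f with hPβ
  set Pγ := lineP z₀ u g with hPγ
  have hβ1 : Polynomial.eval 1 Pβ ≠ 0 := by
    rw [hPβ, lineP_eval]
    have h : (fun j => z₀ j + 1 * u j) = z₁ := by funext j; rw [hu]; ring
    rw [h]; exact hz₁
  have hγ0 : Polynomial.eval 0 Pγ ≠ 0 := by rw [hPγ, lineP_eval_zero]; exact hg0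
  have hβ0 : Polynomial.eval 0 Pβ = 0 := by rw [hPβ, lineP_eval_zero]; exact hf0
  have hOopen : IsOpen ((fun ζ => Polynomial.eval ζ Pγ) ⁻¹' {0}ᶜ) :=
    (isOpen_compl_singleton).preimage (Polynomial.continuous _)
  have hOnhds : ((fun ζ => Polynomial.eval ζ Pγ) ⁻¹' {0}ᶜ) ∈ nhds (0:ℂ) :=
    hOopen.mem_nhds (by simp [hγ0])
  set U : Set ℂ := Metric.closedBall 0 δ ∩ ((fun ζ => Polynomial.eval ζ Pγ) ⁻¹' {0}ᶜ) with hU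
  have hUnhds : U ∈ nhds (0:ℂ) :=
    Filter.inter_mem (Metric.closedBall_mem_nhds 0 hδ) hOnhds
  set φ : ℂ → ℂ := fun ζ => -(Polynomial.eval ζ Pβ) / Polynomial.eval ζ Pγ with hφ
  have hφan : AnalyticAt ℂ φ 0 := by
    apply DifferentiableOn.analyticAt (s := (fun ζ => Polynomial.eval ζ Pγ) ⁻¹' {0}ᶜ)
    · apply DifferentiableOn.div
      · exact ((Polynomial.differentiable Pβ).neg).differentiableOn
      · exact (Polynomial.differentiable Pγ).differentiableOn
      · intro x hx; simpa using hx
    · exact hOnhds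
  have hφ0 : φ 0 = 0 := by rw [hφ]; simp [hβ0]
  have hnz : ¬ (∀ᶠ ζ in nhds (0:ℂ), φ ζ = 0) := by
    intro hev
    have hγev : ∀ᶠ ζ in nhds (0:ℂ), Polynomial.eval ζ Pγ ≠ 0 :=
      (Polynomial.continuous Pγ).continuousAt.eventually_ne hγ0
    have hβev : ∀ᶠ ζ in nhds (0:ℂ), Polynomial.eval ζ Pβ = 0 := by
      filter_upwards [hev, hγev] with ζ h1 h2
      rw [hφ] at h1
      simp only [div_eq_zero_iff, neg_eq_zero] at h1
      tauto
    have := poly_eq_zero_of_eventually hβev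
    rw [this] at hβ1
    simp at hβ1
  obtain ⟨ρ, hρ, hval⟩ := key_open φ U hUnhds hφan hφ0 hnz
  set ε : ℝ := ρ/2 with hε
  have hεpos : 0 < ε := by positivity
  have habs : ‖-(Complex.I * (ε:ℂ))‖ < ρ := by
    rw [norm_neg, norm_mul, Complex.norm_I, Complex.norm_real, Real.norm_eq_abs, one_mul,
      abs_of_pos hεpos]
    rw [hε]; linarith
  obtain ⟨ζs, hζU, hφζ⟩ := hval (-(Complex.I * (ε:ℂ))) habs
  obtain ⟨hζball, hζγ'⟩ := hζU
  have hζball' : ‖ζs‖ ≤ δ := by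
    have := Metric.mem_closedBall.mp hζball
    simpa [Complex.dist_eq] using this
  have hζγ : Polynomial.eval ζs Pγ ≠ 0 := by simpa using hζγ'
  have hpos : ∀ j, 0 < ((fun j => z₀ j + ζs * u j) j).im := by
    intro j
    have := hmem ζs 0 hζball' (by simp; linarith) j
    simpa using this
  set y : ℂ := Complex.I * ((ε⁻¹ : ℝ) : ℂ) with hy
  have hyim : 0 < y.im := by
    rw [hy]
    simp [Complex.mul_im]
    positivity
  have h1 : -(Polynomial.eval ζs Pβ) = -(Complex.I*(ε:ℂ)) * Polynomial.eval ζs Pγ := by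
    have h2 := hφζ
    rw [hφ] at h2
    simp only at h2
    rw [div_eq_iff hζγ] at h2
    exact h2
  have hββ : Polynomial.eval ζs Pβ = Complex.I * (ε:ℂ) * Polynomial.eval ζs Pγ := by
    linear_combination -h1
  have hεne : (ε:ℂ) ≠ 0 := by exact_mod_cast ne_of_gt hεpos
  have hfinal : Polynomial.eval ζs Pγ + y * Polynomial.eval ζs Pβ = 0 := by
    rw [hββ, hy]
    field_simp
    have hinv : ((1/ε:ℝ):ℂ) * (ε:ℂ) = 1 := by push_cast; field_simp
    linear_combination (Polynomial.eval ζs Pγ * Complex.I ^ 2) * hinv +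
      Polynomial.eval ζs Pγ * Complex.I_mul_I
  refine hpair (fun j => z₀ j + ζs * u j) y hpos hyim ?_
  rw [← lineP_eval z₀ u g ζs, ← lineP_eval z₀ u f ζs]
  exact hfinal
/-- Refined Lieb–Sokal Lemma: if `g(z) + y·f(z)` is stable, `v ∈ ℝ^n` has
non-negative components, and the degree of `f` in direction `v` is at most 1
(expressed as `∂_v ∂_v f = 0`), then `g − ∂_v f` is stable or identically zero. -/
theorem refined_lieb_sokal {n : ℕ} (f g : MvPolynomial (Fin n) ℂ)
    (hst : Stable (liftPoly g f))
    (v : Fin n → ℝ) (hv : ∀ j, 0 ≤ v j)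
    (hdeg : dirDeriv v (dirDeriv v f) = 0) :
    Stable (g - dirDeriv v f) ∨ g - dirDeriv v f = 0 := by
  classical
  by_cases hzero : g - dirDeriv v f = 0
  · exact Or.inr hzero
  refine Or.inl ?_
  intro z₀ hz₀ hh0
  have hpair := stable_pair hst
  by_cases hn : Nonempty (Fin n)
  case neg =>
    haveI : IsEmpty (Fin n) := not_nonempty_iff.mp hn
    obtain ⟨a, ha⟩ := MvPolynomial.C_surjective (Fin n) (g - dirDeriv v f)
    apply hzero
    rw [← ha]
    have h1 : eval z₀ (C a : MvPolynomial (Fin n) ℂ) = 0 := by rw [ha]; exact hh0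
    rw [eval_C] at h1
    rw [h1, map_zero]
  case pos =>
  haveI := hn
  by_cases hf : f = 0
  · have hD0 : dirDeriv v f = 0 := by rw [hf]; simp [dirDeriv]
    apply hpair z₀ Complex.I hz₀ (by simp)
    rw [hf, map_zero, mul_zero, add_zero]
    rw [hD0, sub_zero] at hh0
    exact hh0
  have hfst : Stable f := f_stable hst hf
  have hchoice : ∃ z₁, eval z₁ (g - dirDeriv v f) ≠ 0 ∧ (g ≠ 0 → eval z₁ g ≠ 0) := by
    by_cases hg : g = 0
    · obtain ⟨z₁, hz₁⟩ := exists_eval_ne hzero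
      exact ⟨z₁, hz₁, fun hg' => absurd hg hg'⟩
    · obtain ⟨z₁, hz₁⟩ := exists_eval_ne (mul_ne_zero hzero hg)
      rw [map_mul] at hz₁
      exact ⟨z₁, left_ne_zero_of_mul hz₁, fun _ => right_ne_zero_of_mul hz₁⟩
  obtain ⟨z₁, hη1raw, hγ1raw⟩ := hchoice
  set u : Fin n → ℂ := fun j => z₁ j - z₀ j with hu
  obtain ⟨δ, hδ, hmem⟩ := exists_delta z₀ hz₀ u v hv
  set Pβ := lineP z₀ u f with hPβ
  set Pγ := lineP z₀ u g with hPγ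
  set Pc := lineP z₀ u (dirDeriv v f) with hPc
  set Pη := lineP z₀ u (g - dirDeriv v f) with hPη
  have hηsub : ∀ t, Polynomial.eval t Pη = Polynomial.eval t Pγ - Polynomial.eval t Pc := by
    intro t
    rw [hPη, hPγ, hPc]
    simp only [lineP, map_sub, Polynomial.eval_sub]
  have heval1 : (fun j => z₀ j + 1 * u j) = z₁ := funext fun j => by rw [hu]; ring
  have hη1 : Polynomial.eval 1 Pη ≠ 0 := by rw [hPη, lineP_eval, heval1]; exact hη1raw
  have hη0 : Polynomial.eval 0 Pη = 0 := by rw [hPη, lineP_eval_zero]; exact hh0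
  have hβ0ne : Polynomial.eval 0 Pβ ≠ 0 := by rw [hPβ, lineP_eval_zero]; exact hfst z₀ hz₀
  have hfline : ∀ (ζ w : ℂ), ‖ζ‖ ≤ δ → -δ ≤ w.im →
      Polynomial.eval ζ Pβ + w * Polynomial.eval ζ Pc ≠ 0 := by
    intro ζ w h1 h2 heq
    apply hfst (fun j => z₀ j + ζ * u j + w * ((v j : ℝ) : ℂ)) (hmem ζ w h1 h2)
    have haff := (eval_line_affine v f hdeg (fun j => z₀ j + ζ * u j) w).1
    have hpteq : (fun j => (fun j => z₀ j + ζ * u j) j + w * ((v j : ℝ) : ℂ))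
        = (fun j => z₀ j + ζ * u j + w * ((v j : ℝ) : ℂ)) := rfl
    rw [hpteq] at haff
    rw [haff, ← lineP_eval z₀ u f ζ, ← lineP_eval z₀ u (dirDeriv v f) ζ]
    exact heq
  have hβne : ∀ ζ, ‖ζ‖ ≤ δ → Polynomial.eval ζ Pβ ≠ 0 := by
    intro ζ hζ h0
    apply hfline ζ 0 hζ (by simp; linarith)
    rw [h0]; ring
  have hpos : ∀ ζ, ‖ζ‖ ≤ δ → ∀ j, 0 < ((fun j => z₀ j + ζ * u j) j).im := by
    intro ζ hζ j
    have h1 := hmem ζ 0 hζ (by simp; linarith) j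
    simpa using h1
  by_cases hc0 : Polynomial.eval 0 Pc = 0
  case pos =>
    have hγ0 : Polynomial.eval 0 Pγ = 0 := by
      have h1 := hη0; rw [hηsub 0, hc0, sub_zero] at h1; exact h1
    set O : Set ℂ := (fun ζ => Polynomial.eval ζ Pβ) ⁻¹' {0}ᶜ with hO
    have hOopen : IsOpen O := isOpen_compl_singleton.preimage (Polynomial.continuous _)
    have hOnhds : O ∈ nhds (0:ℂ) := hOopen.mem_nhds (by simp [hO, hβ0ne])
    set U : Set ℂ := Metric.closedBall 0 δ ∩ O with hUdef
    have hUnhds : U ∈ nhds (0:ℂ) :=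
      Filter.inter_mem (Metric.closedBall_mem_nhds 0 hδ) hOnhds
    by_cases hg : g = 0
    case pos =>
      have hPγ0 : Pγ = 0 := by rw [hPγ, hg]; simp [lineP]
      have hc1 : Polynomial.eval 1 Pc ≠ 0 := by
        have h1 := hη1; rw [hηsub 1, hPγ0] at h1; simpa using h1
      set ψ : ℂ → ℂ := fun ζ => Polynomial.eval ζ Pc / Polynomial.eval ζ Pβ with hψ
      have hψan : AnalyticAt ℂ ψ 0 := by
        apply DifferentiableOn.analyticAt (s := O) _ hOnhds
        exact DifferentiableOn.div (Polynomial.differentiable Pc).differentiableOn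
          (Polynomial.differentiable Pβ).differentiableOn (fun x hx => by simpa [hO] using hx)
      have hψ0 : ψ 0 = 0 := by rw [hψ]; simp [hc0]
      have hnz : ¬ (∀ᶠ ζ in nhds (0:ℂ), ψ ζ = 0) := by
        intro hev
        have hβev : ∀ᶠ ζ in nhds (0:ℂ), Polynomial.eval ζ Pβ ≠ 0 :=
          (Polynomial.continuous Pβ).continuousAt.eventually_ne hβ0ne
        have hcev : ∀ᶠ ζ in nhds (0:ℂ), Polynomial.eval ζ Pc = 0 := by
          filter_upwards [hev, hβev] with ζ h1 h2
          rw [hψ] at h1; simp only [div_eq_zero_iff] at h1; tauto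
        have h3 := poly_eq_zero_of_eventually hcev
        rw [h3] at hc1; simp at hc1
      obtain ⟨ρ, hρ, hval⟩ := key_open ψ U hUnhds hψan hψ0 hnz
      set ε : ℝ := ρ/2 with hε
      have hεpos : 0 < ε := by positivity
      have habs : ‖Complex.I * (ε:ℂ)‖ < ρ := by
        rw [norm_mul, Complex.norm_I, Complex.norm_real, Real.norm_eq_abs, one_mul, abs_of_pos hεpos, hε]
        linarith
      obtain ⟨ζs, hζU, hψζ⟩ := hval (Complex.I * (ε:ℂ)) habs
      obtain ⟨hζball, hζO⟩ := hζU
      have hζδ : ‖ζs‖ ≤ δ := by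
        simpa [Complex.dist_eq] using Metric.mem_closedBall.mp hζball
      have hζβ : Polynomial.eval ζs Pβ ≠ 0 := by simpa [hO] using hζO
      set s₀ : ℂ := Complex.I * ((ε⁻¹:ℝ):ℂ) with hs₀
      have hs₀im : 0 < s₀.im := by rw [hs₀]; simp [Complex.mul_im]; positivity
      have hceq : Polynomial.eval ζs Pc = Complex.I * (ε:ℂ) * Polynomial.eval ζs Pβ := by
        have h2 := hψζ; rw [hψ] at h2; simp only at h2; rw [div_eq_iff hζβ] at h2; exact h2
      have hεne : (ε:ℂ) ≠ 0 := by exact_mod_cast ne_of_gt hεpos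
      apply hfline ζs s₀ hζδ (by linarith)
      rw [hceq, hs₀]
      field_simp
      have hinv : ((1/ε:ℝ):ℂ) * (ε:ℂ) = 1 := by push_cast; field_simp
      linear_combination (Polynomial.eval ζs Pβ * Complex.I ^ 2) * hinv +
        Polynomial.eval ζs Pβ * Complex.I_mul_I
    case neg =>
      have hγ1 : Polynomial.eval 1 Pγ ≠ 0 := by
        rw [hPγ, lineP_eval, heval1]; exact hγ1raw hg
      set φ : ℂ → ℂ := fun ζ => -(Polynomial.eval ζ Pγ) / Polynomial.eval ζ Pβ with hφ
      have hφan : AnalyticAt ℂ φ 0 := by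
        apply DifferentiableOn.analyticAt (s := O) _ hOnhds
        exact DifferentiableOn.div (Polynomial.differentiable Pγ).neg.differentiableOn
          (Polynomial.differentiable Pβ).differentiableOn (fun x hx => by simpa [hO] using hx)
      have hφ0 : φ 0 = 0 := by rw [hφ]; simp [hγ0]
      have hnz : ¬ (∀ᶠ ζ in nhds (0:ℂ), φ ζ = 0) := by
        intro hev
        have hβev : ∀ᶠ ζ in nhds (0:ℂ), Polynomial.eval ζ Pβ ≠ 0 :=
          (Polynomial.continuous Pβ).continuousAt.eventually_ne hβ0ne
        have hγev : ∀ᶠ ζ in nhds (0:ℂ), Polynomial.eval ζ Pγ = 0 := by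
          filter_upwards [hev, hβev] with ζ h1 h2
          rw [hφ] at h1; simp only [div_eq_zero_iff, neg_eq_zero] at h1; tauto
        have h3 := poly_eq_zero_of_eventually hγev
        rw [h3] at hγ1; simp at hγ1
      obtain ⟨ρ, hρ, hval⟩ := key_open φ U hUnhds hφan hφ0 hnz
      set ε : ℝ := ρ/2 with hε
      have hεpos : 0 < ε := by positivity
      have habs : ‖Complex.I * (ε:ℂ)‖ < ρ := by
        rw [norm_mul, Complex.norm_I, Complex.norm_real, Real.norm_eq_abs, one_mul, abs_of_pos hεpos, hε]
        linarith
      obtain ⟨ζs, hζU, hφζ⟩ := hval (Complex.I * (ε:ℂ)) habs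
      obtain ⟨hζball, hζO⟩ := hζU
      have hζδ : ‖ζs‖ ≤ δ := by
        simpa [Complex.dist_eq] using Metric.mem_closedBall.mp hζball
      have hζβ : Polynomial.eval ζs Pβ ≠ 0 := by simpa [hO] using hζO
      set y : ℂ := Complex.I * (ε:ℂ) with hy
      have hyim : 0 < y.im := by rw [hy]; simp [Complex.mul_im]; positivity
      apply hpair (fun j => z₀ j + ζs * u j) y (hpos ζs hζδ) hyim
      rw [← lineP_eval z₀ u g ζs, ← lineP_eval z₀ u f ζs]
      have h2 := hφζ; rw [hφ] at h2; simp only at h2; rw [div_eq_iff hζβ] at h2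
      rw [hy]
      linear_combination -h2
  case neg =>
    have hγ0ne : Polynomial.eval 0 Pγ ≠ 0 := by
      intro h0
      apply hc0
      have h1 := hη0
      rw [hηsub 0, h0, zero_sub, neg_eq_zero] at h1
      exact h1
    set O : Set ℂ := ((fun ζ => Polynomial.eval ζ Pc) ⁻¹' {0}ᶜ)
        ∩ ((fun ζ => Polynomial.eval ζ Pγ) ⁻¹' {0}ᶜ) with hO
    have hOopen : IsOpen O :=
      IsOpen.inter (isOpen_compl_singleton.preimage (Polynomial.continuous _))
        (isOpen_compl_singleton.preimage (Polynomial.continuous _))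
    have hOnhds : O ∈ nhds (0:ℂ) := hOopen.mem_nhds (by
      constructor
      · simp [hc0]
      · simp [hγ0ne])
    set U : Set ℂ := Metric.closedBall 0 δ ∩ O with hUdef
    have hUnhds : U ∈ nhds (0:ℂ) :=
      Filter.inter_mem (Metric.closedBall_mem_nhds 0 hδ) hOnhds
    set w₀ : ℂ → ℂ := fun ζ => -(Polynomial.eval ζ Pβ) / Polynomial.eval ζ Pc with hw₀
    have hw₀im : ∀ ζ, ‖ζ‖ ≤ δ → Polynomial.eval ζ Pc ≠ 0 → (w₀ ζ).im ≤ -δ := by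
      intro ζ h1 h2
      by_contra hlt
      push_neg at hlt
      apply hfline ζ (w₀ ζ) h1 (le_of_lt hlt)
      rw [hw₀]
      field_simp
      ring
    set φ : ℂ → ℂ := fun ζ => w₀ ζ * Polynomial.eval ζ Pη / Polynomial.eval ζ Pγ with hφ
    have hφan : AnalyticAt ℂ φ 0 := by
      apply DifferentiableOn.analyticAt (s := O) _ hOnhds
      apply DifferentiableOn.div _ (Polynomial.differentiable Pγ).differentiableOn
        (fun x hx => by simpa [hO] using hx.2)
      apply DifferentiableOn.mul _ (Polynomial.differentiable Pη).differentiableOn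
      exact DifferentiableOn.div (Polynomial.differentiable Pβ).neg.differentiableOn
        (Polynomial.differentiable Pc).differentiableOn (fun x hx => by simpa [hO] using hx.1)
    have hφ0 : φ 0 = 0 := by rw [hφ]; simp [hη0]
    have hnz : ¬ (∀ᶠ ζ in nhds (0:ℂ), φ ζ = 0) := by
      intro hev
      have hβev : ∀ᶠ ζ in nhds (0:ℂ), Polynomial.eval ζ Pβ ≠ 0 :=
        (Polynomial.continuous Pβ).continuousAt.eventually_ne hβ0ne
      have hcev : ∀ᶠ ζ in nhds (0:ℂ), Polynomial.eval ζ Pc ≠ 0 :=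
        (Polynomial.continuous Pc).continuousAt.eventually_ne hc0
      have hγev : ∀ᶠ ζ in nhds (0:ℂ), Polynomial.eval ζ Pγ ≠ 0 :=
        (Polynomial.continuous Pγ).continuousAt.eventually_ne hγ0ne
      have hηev : ∀ᶠ ζ in nhds (0:ℂ), Polynomial.eval ζ Pη = 0 := by
        filter_upwards [hev, hβev, hcev, hγev] with ζ h1 h2 h3 h4
        rw [hφ] at h1; simp only at h1
        rw [div_eq_zero_iff] at h1
        rcases h1 with h1 | h1
        · rcases mul_eq_zero.mp h1 with h5 | h5
          · exfalso
            rw [hw₀] at h5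
            simp only [div_eq_zero_iff, neg_eq_zero] at h5
            exact h5.elim h2 h3
          · exact h5
        · exact absurd h1 h4
      have h3 := poly_eq_zero_of_eventually hηev
      rw [h3] at hη1; simp at hη1
    obtain ⟨ρ, hρ, hval⟩ := key_open φ U hUnhds hφan hφ0 hnz
    set ε : ℝ := ρ/2 with hε
    have hεpos : 0 < ε := by positivity
    have habs : ‖Complex.I * (ε:ℂ)‖ < ρ := by
      rw [norm_mul, Complex.norm_I, Complex.norm_real, Real.norm_eq_abs, one_mul, abs_of_pos hεpos, hε]
      linarith
    obtain ⟨ζs, hζU, hφζ⟩ := hval (Complex.I * (ε:ℂ)) habs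
    obtain ⟨hζball, hζO⟩ := hζU
    have hζδ : ‖ζs‖ ≤ δ := by
      simpa [Complex.dist_eq] using Metric.mem_closedBall.mp hζball
    have hζc : Polynomial.eval ζs Pc ≠ 0 := by
      have := hζO.1; simpa using this
    have hζγ : Polynomial.eval ζs Pγ ≠ 0 := by
      have := hζO.2; simpa using this
    have hw₀ζ : (w₀ ζs).im ≤ -δ := hw₀im ζs hζδ hζc
    set W : ℂ := w₀ ζs - Complex.I * (ε:ℂ) with hW
    have hWim : W.im < 0 := by
      rw [hW]
      simp only [Complex.sub_im, Complex.mul_im, Complex.I_re, Complex.I_im,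
        Complex.ofReal_re, Complex.ofReal_im, zero_mul, one_mul, mul_zero, add_zero, zero_add]
      linarith
    have hWne : W ≠ 0 := by
      intro h0; rw [h0] at hWim; simp at hWim
    have hyim : 0 < (W⁻¹).im := by
      rw [Complex.inv_im]
      apply div_pos (by linarith) (Complex.normSq_pos.mpr hWne)
    apply hpair (fun j => z₀ j + ζs * u j) W⁻¹ (hpos ζs hζδ) hyim
    rw [← lineP_eval z₀ u g ζs, ← lineP_eval z₀ u f ζs]
    have h2 := hφζ
    rw [hφ] at h2; simp only at h2
    rw [div_eq_iff hζγ, hηsub ζs, hw₀] at h2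
    have hkey : W * Polynomial.eval ζs Pγ + Polynomial.eval ζs Pβ = 0 := by
      rw [hW, hw₀]
      field_simp at h2 ⊢
      linear_combination h2
    have h3 : Polynomial.eval ζs Pγ + W⁻¹ * Polynomial.eval ζs Pβ = 0 := by
      field_simp
      linear_combination hkey
    exact h3
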